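/- Let P_1, P_2, … be orthogonal projections on a complex Hilbert space H, let 0 < λ_n < 2 for every n, and set A_n := I − λ_n P_n, T_0 := I, T_n := A_n A_{n−1} ⋯ A_1. If ∑_{n=1}^∞ λ_n/(2−λ_n) < ∞, then the products T_n converge in the strong operator topology: there exists a bounded operator T_∞ on H such that T_n x → T_∞ x in norm for every x ∈ H. -/

import Mathlib

open ContinuousLinearMap

/-- **Summability criterion for effectiveness (Theorem 2.4, convergence part).**
If `∑ λₙ/(2-λₙ) < ∞` then the products `T n = (I - λₙPₙ)⋯(I - λ₁P₁)` converge in the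
strong operator topology to a bounded operator `T∞`. -/
theorem summability_criterion_effectiveness
    {H : Type*} [NormedAddCommGroup H] [InnerProductSpace ℂ H] [CompleteSpace H]
    (P : ℕ → H →L[ℂ] H) (hPsa : ∀ n, adjoint (P n) = P n) (hPidem : ∀ n, P n * P n = P n)
    (lam : ℕ → ℝ) (hlam0 : ∀ n, 0 < lam n) (hlam2 : ∀ n, lam n < 2)
    (A : ℕ → H →L[ℂ] H) (hA : ∀ n, A n = 1 - (lam n : ℂ) • P n)
    (T : ℕ → H →L[ℂ] H) (hT0 : T 0 = 1) (hTsucc : ∀ n, T (n + 1) = A n * T n)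
    (hsum : Summable fun n => lam n / (2 - lam n)) :
    ∃ Tinf : H →L[ℂ] H, ∀ x : H,
      Filter.Tendsto (fun n => T n x) Filter.atTop (nhds (Tinf x)) := by
  -- key norm identity
  have hnormA : ∀ n (y : H), ‖A n y‖ ^ 2 = ‖y‖ ^ 2 - (lam n * (2 - lam n)) * ‖P n y‖ ^ 2 := by
    intro n y
    have h1 : (inner ℂ y (P n y) : ℂ) = inner ℂ (P n y) (P n y) := by
      conv_lhs => rw [← hPidem n]
      rw [mul_apply_eq_comp, ← adjoint_inner_left, hPsa]
    have h2 : RCLike.re (inner ℂ y ((lam n : ℂ) • P n y) : ℂ) = lam n * ‖P n y‖ ^ 2 := by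
      rw [inner_smul_right, h1, inner_self_eq_norm_sq_to_K]
      simp
      left
      norm_cast
    rw [hA n]
    simp only [sub_apply, one_apply_eq_self, smul_apply]
    rw [@norm_sub_sq ℂ, h2, norm_smul]
    simp only [Complex.norm_real, Real.norm_eq_abs, abs_of_pos (hlam0 n)]
    ring
  have hc0 : ∀ n, 0 < lam n * (2 - lam n) := fun n =>
    mul_pos (hlam0 n) (by linarith [hlam2 n])
  -- monotonicity of the norms and partial sum identity
  have hkey : ∀ (x : H) (n : ℕ),
      ‖T n x‖ ^ 2 + ∑ k ∈ Finset.range n, (lam k * (2 - lam k)) * ‖P k (T k x)‖ ^ 2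
        = ‖x‖ ^ 2 := by
    intro x n
    induction n with
    | zero => simp [hT0]
    | succ n ih =>
      rw [Finset.sum_range_succ, hTsucc n, mul_apply_eq_comp, hnormA n]
      linarith [ih]
  have hTle : ∀ (x : H) (n : ℕ), ‖T n x‖ ≤ ‖x‖ := by
    intro x n
    have h := hkey x n
    have hs : (0:ℝ) ≤ ∑ k ∈ Finset.range n, (lam k * (2 - lam k)) * ‖P k (T k x)‖ ^ 2 :=
      Finset.sum_nonneg fun k _ => mul_nonneg (hc0 k).le (sq_nonneg _)
    have : ‖T n x‖ ^ 2 ≤ ‖x‖ ^ 2 := by linarith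
    nlinarith [norm_nonneg (T n x), norm_nonneg x]
  -- summability of the quadratic terms
  have hsumq : ∀ (x : H), Summable fun n => (lam n * (2 - lam n)) * ‖P n (T n x)‖ ^ 2 := by
    intro x
    apply summable_of_sum_range_le (c := ‖x‖ ^ 2)
      (fun k => mul_nonneg (hc0 k).le (sq_nonneg _))
    intro n
    have := hkey x n
    nlinarith [sq_nonneg (‖T n x‖)]
  -- summability of the differences
  have hdiff : ∀ (x : H) (n : ℕ), ‖T (n+1) x - T n x‖ = lam n * ‖P n (T n x)‖ := by
    intro x n
    rw [hTsucc n, mul_apply_eq_comp, hA n]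
    simp only [sub_apply, one_apply_eq_self, smul_apply]
    rw [sub_sub_cancel_left, norm_neg, norm_smul]
    simp [abs_of_pos (hlam0 n)]
  have hsumdiff : ∀ x : H, Summable fun n => ‖T (n+1) x - T n x‖ := by
    intro x
    have hb : ∀ n, ‖T (n+1) x - T n x‖ ≤
        (lam n / (2 - lam n) + (lam n * (2 - lam n)) * ‖P n (T n x)‖ ^ 2) / 2 := by
      intro n
      rw [hdiff x n]
      have h2l : 0 < 2 - lam n := by linarith [hlam2 n]
      set t := ‖P n (T n x)‖ with ht
      have e : lam n / (2 - lam n) + (lam n * (2 - lam n)) * t ^ 2 - 2 * (lam n * t)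
          = lam n * (1 - (2 - lam n) * t) ^ 2 / (2 - lam n) := by
        field_simp
        ring
      have hnn : 0 ≤ lam n * (1 - (2 - lam n) * t) ^ 2 / (2 - lam n) :=
        div_nonneg (mul_nonneg (hlam0 n).le (sq_nonneg _)) h2l.le
      linarith
    exact Summable.of_nonneg_of_le (fun n => norm_nonneg _) hb
      (((hsum.add (hsumq x)).div_const 2))
  -- Cauchy, hence convergent
  have hconv : ∀ x : H, ∃ y : H, Filter.Tendsto (fun n => T n x) Filter.atTop (nhds y) := by
    intro x
    have : CauchySeq fun n => T n x := by
      apply cauchySeq_of_summable_dist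
      simpa [dist_eq_norm, norm_sub_rev] using hsumdiff x
    exact cauchySeq_tendsto_of_complete this
  choose g hg using hconv
  -- the limit map is linear and bounded
  have hadd : ∀ x y : H, g (x + y) = g x + g y := by
    intro x y
    refine tendsto_nhds_unique (hg (x + y)) ?_
    have := (hg x).add (hg y)
    simpa using this
  have hsmul : ∀ (c : ℂ) (x : H), g (c • x) = c • g x := by
    intro c x
    refine tendsto_nhds_unique (hg (c • x)) ?_
    have := (hg x).const_smul c
    simpa using this
  have hbound : ∀ x : H, ‖g x‖ ≤ 1 * ‖x‖ := by
    intro x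
    rw [one_mul]
    exact le_of_tendsto ((hg x).norm) (Filter.Eventually.of_forall fun n => hTle x n)
  refine ⟨LinearMap.mkContinuous
    { toFun := g, map_add' := hadd, map_smul' := hsmul } 1 hbound, fun x => hg x⟩
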